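/- arXiv:1805.04646 — 3 statements merged into one kernel-verified Lean document; each statement's English description precedes it below -/
import Mathlib

section
/- Let 0 < ε < arctan(1/2) and set z = tan(ε). Then the complex number G(z) = −(1+z)(1+3z)/((1+i·z)(1−2z)) has argument exactly π − ε, i.e., Complex.arg(G(tan ε)) = π − ε. (Note that for 0 < ε < arctan(1/2) one has 0 < tan ε < 1/2, so the denominator is nonzero.) -/
/-- For `0 < ε < arctan(1/2)` and `z = tan ε`, the complex number
`G(z) = −(1+z)(1+3z)/((1+i·z)(1−2z))` has argument exactly `π − ε`. -/
theorem arg_G_tan_eq (ε : ℝ) (h1 : 0 < ε) (h2 : ε < Real.arctan (1/2)) :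
    Complex.arg (-(((1 + (Real.tan ε : ℂ)) * (1 + 3 * (Real.tan ε : ℂ))) /
      ((1 + Complex.I * (Real.tan ε : ℂ)) * (1 - 2 * (Real.tan ε : ℂ))))) = Real.pi - ε := by
  have hpi2 : ε < Real.pi / 2 := h2.trans (Real.arctan_lt_pi_div_two _)
  set t := Real.tan ε with ht
  have ht0 : 0 < t := Real.tan_pos_of_pos_of_lt_pi_div_two h1 hpi2
  have ht2 : t < 1/2 := by
    have := Real.tan_lt_tan_of_nonneg_of_lt_pi_div_two h1.le (Real.arctan_lt_pi_div_two _) h2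
    rwa [Real.tan_arctan] at this
  have hcos : 0 < Real.cos ε := Real.cos_pos_of_mem_Ioo ⟨by linarith [Real.pi_pos], hpi2⟩
  obtain ⟨c, hc0, hceq⟩ : ∃ c : ℝ, 0 < c ∧ Real.cos ε = c := ⟨_, hcos, rfl⟩
  have hsin : Real.sin ε = t * c := by
    rw [ht, Real.tan_eq_sin_div_cos, hceq]; field_simp
  set r : ℝ := (1+t)*(1+3*t)/((1-2*t)*(1+t^2)*c) with hr
  have hrpos : 0 < r := by
    apply div_pos
    · positivity
    · have h2t : 0 < 1 - 2*t := by linarith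
      positivity
  have hd1 : (1 : ℂ) + Complex.I * t ≠ 0 := by
    intro h
    have := congrArg Complex.re h
    simp [Complex.add_re, Complex.mul_re] at this
  have hd2 : (1 : ℂ) - 2 * (t : ℂ) ≠ 0 := by
    intro h
    have h' : (1 : ℝ) - 2 * t = 0 := by exact_mod_cast h
    linarith
  have hq : (1 : ℂ) + (t:ℂ)^2 ≠ 0 := by
    intro h
    have h' : (1 : ℝ) + t^2 = 0 := by exact_mod_cast h
    nlinarith
  have hcc : (c : ℂ) ≠ 0 := by exact_mod_cast hc0.ne'
  have key : (-(((1 + (t : ℂ)) * (1 + 3 * (t : ℂ))) /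
      ((1 + Complex.I * (t : ℂ)) * (1 - 2 * (t : ℂ)))))
      = (r : ℂ) * (Real.cos (Real.pi - ε) + Real.sin (Real.pi - ε) * Complex.I) := by
    rw [Real.cos_pi_sub, Real.sin_pi_sub, hceq, hsin, hr]
    push_cast
    rw [neg_div', div_mul_eq_mul_div, div_eq_div_iff (mul_ne_zero hd1 hd2) (mul_ne_zero (mul_ne_zero hd2 hq) hcc)]
    ring_nf
    simp only [Complex.I_sq]
    ring
  rw [key, Complex.ofReal_cos, Complex.ofReal_sin]
  exact Complex.arg_mul_cos_add_sin_mul_I hrpos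
    ⟨by linarith [Real.pi_pos], by linarith⟩
end

section
/- Let 0 < ε < π/2 and set z = tan(ε). Then the complex number H(z) = (i·z − 1)/(3 + z) has argument exactly π − ε, i.e., Complex.arg((i·tan(ε) − 1)/(3 + tan(ε))) = π − ε. -/
/-- For `0 < ε < π/2` and `z = tan ε`, the complex number
`H(z) = (i·z − 1)/(3 + z)` has argument exactly `π − ε`. -/
theorem arg_H_tan_eq (ε : ℝ) (h1 : 0 < ε) (h2 : ε < Real.pi / 2) :
    Complex.arg ((Complex.I * (Real.tan ε : ℂ) - 1) / (3 + (Real.tan ε : ℂ))) = Real.pi - ε := by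
  have hcos : 0 < Real.cos ε := Real.cos_pos_of_mem_Ioo ⟨by linarith [Real.pi_pos], h2⟩
  have ht : 0 < Real.tan ε := Real.tan_pos_of_pos_of_lt_pi_div_two h1 h2
  have h3 : (0:ℝ) < 3 + Real.tan ε := by linarith
  have hr : (0:ℝ) < ((3 + Real.tan ε) * Real.cos ε)⁻¹ := by positivity
  have hθ : Real.pi - ε ∈ Set.Ioc (-Real.pi) Real.pi := by
    constructor <;> [linarith [Real.pi_pos]; linarith]
  have key : (Complex.I * (Real.tan ε : ℂ) - 1) / (3 + (Real.tan ε : ℂ))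
      = ((((3 + Real.tan ε) * Real.cos ε)⁻¹ : ℝ) : ℂ) *
        (((Real.cos (Real.pi - ε) : ℝ) : ℂ) + ((Real.sin (Real.pi - ε) : ℝ) : ℂ) * Complex.I) := by
    rw [Real.cos_pi_sub, Real.sin_pi_sub]
    push_cast
    have hC : Complex.cos (ε : ℂ) ≠ 0 := by
      rw [← Complex.ofReal_cos]; exact Complex.ofReal_ne_zero.2 hcos.ne'
    have hdenC : (3:ℂ) + Complex.tan (ε : ℂ) ≠ 0 := by
      have := Complex.ofReal_ne_zero.2 h3.ne'
      push_cast at this; exact this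
    have htC : Complex.tan (ε : ℂ) * Complex.cos (ε : ℂ) = Complex.sin (ε : ℂ) := by
      rw [Complex.tan_eq_sin_div_cos]; field_simp
    field_simp
    linear_combination Complex.I * htC
  rw [key]
  rw [Complex.ofReal_cos, Complex.ofReal_sin]
  exact Complex.arg_mul_cos_add_sin_mul_I hr hθ
end

section
/- For every ε with 0 < ε < arctan(1/2), there exists z ∈ ℂ such that all three complex numbers F(z) = i·z − 1, G(z) = −(1+z)(1+3z)/((1+i·z)(1−2z)), and H(z) = (i·z − 1)/(3 + z) are nonzero and have argument π − ε; in fact z = tan(ε) works. Consequently, for every ε > 0 the curve {(F(z), G(z), H(z)) : z ∈ ℂ} meets the set T^ε × T^ε × T^ε ⊂ ℂ³ in a nonempty (real zero-dimensional) set. -/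
/-- For every `0 < ε < arctan(1/2)` there exists `z ∈ ℂ`
(indeed `z = tan ε`) such that `F(z) = i·z − 1`,
`G(z) = −(1+z)(1+3z)/((1+i·z)(1−2z))` and `H(z) = (i·z−1)/(3+z)` are all
nonzero with argument `π − ε`; hence the curve `(F, G, H)` meets
`T^ε × T^ε × T^ε` in a nonempty set. -/
theorem counterexample_meets_perturbed_cuts (ε : ℝ) (h1 : 0 < ε)
    (h2 : ε < Real.arctan (1/2)) :
    ∃ z : ℂ, z = (Real.tan ε : ℂ) ∧
      (Complex.I * z - 1 ≠ 0 ∧ Complex.arg (Complex.I * z - 1) = Real.pi - ε) ∧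
      (-(((1 + z) * (1 + 3 * z)) / ((1 + Complex.I * z) * (1 - 2 * z))) ≠ 0 ∧
        Complex.arg (-(((1 + z) * (1 + 3 * z)) / ((1 + Complex.I * z) * (1 - 2 * z))))
          = Real.pi - ε) ∧
      ((Complex.I * z - 1) / (3 + z) ≠ 0 ∧
        Complex.arg ((Complex.I * z - 1) / (3 + z)) = Real.pi - ε) := by
  set t : ℝ := Real.tan ε with htdef
  have hε2 : ε < Real.pi / 2 := h2.trans (Real.arctan_lt_pi_div_two _)
  have ht : 0 < t := Real.tan_pos_of_pos_of_lt_pi_div_two h1 hε2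
  have ht2 : t < 1 / 2 := by
    have : Real.arctan t < Real.arctan (1 / 2) := by
      rwa [htdef, Real.arctan_tan (by linarith [Real.pi_pos]) hε2]
    exact Real.arctan_strictMono.lt_iff_lt.mp this
  have hcos : 0 < Real.cos ε :=
    Real.cos_pos_of_mem_Ioo ⟨by linarith [Real.pi_pos], hε2⟩
  -- the base complex number w = i t - 1
  set w : ℂ := Complex.I * (t : ℂ) - 1 with hwdef
  have hw0 : w ≠ 0 := by
    intro h
    have := congrArg Complex.re h
    simp [hwdef] at this
  -- arg w = π - ε
  have hargw : Complex.arg w = Real.pi - ε := by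
    have hmem : Real.pi - ε ∈ Set.Ioc (-Real.pi) Real.pi := by
      constructor <;> [linarith [Real.pi_pos]; linarith]
    have hsinR : Real.sin ε = Real.cos ε * t := by
      rw [htdef, Real.tan_eq_sin_div_cos, mul_div_cancel₀ _ hcos.ne']
    have key : ((Real.cos ε : ℝ) : ℂ) * w =
        ((Real.cos (Real.pi - ε) : ℝ) : ℂ) + ((Real.sin (Real.pi - ε) : ℝ) : ℂ) * Complex.I := by
      rw [Real.cos_pi_sub, Real.sin_pi_sub, hsinR, Complex.ofReal_neg,
        Complex.ofReal_mul, hwdef]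
      ring
    have harg := Complex.arg_cos_add_sin_mul_I hmem
    rw [← Complex.ofReal_cos, ← Complex.ofReal_sin, ← key,
      Complex.arg_real_mul w hcos] at harg
    exact harg
  refine ⟨(t : ℂ), rfl, ⟨hw0, hargw⟩, ?_, ?_⟩
  · -- G
    set r : ℝ := (1 + t) * (1 + 3 * t) / ((1 - 2 * t) * (1 + t ^ 2)) with hrdef
    have hr : 0 < r := by
      apply div_pos <;> [skip; apply mul_pos] <;> nlinarith
    have h1z : ((1 : ℂ) + Complex.I * (t : ℂ)) ≠ 0 := by
      intro h
      have := congrArg Complex.re h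
      simp at this
    have h2z : ((1 : ℂ) - 2 * (t : ℂ)) ≠ 0 := by
      intro h
      have := congrArg Complex.re h
      simp at this
      linarith
    have ht2z : ((1 : ℂ) + (t:ℂ) ^ 2) ≠ 0 := by
      have h : (0:ℝ) < 1 + t ^ 2 := by positivity
      exact_mod_cast h.ne'
    have hG : -(((1 + (t:ℂ)) * (1 + 3 * (t:ℂ))) /
        ((1 + Complex.I * (t:ℂ)) * (1 - 2 * (t:ℂ)))) = ((r : ℝ) : ℂ) * w := by
      rw [hrdef, hwdef]
      push_cast
      have h1z' : (1 + (t:ℂ) * Complex.I) ≠ 0 := by rwa [mul_comm]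
      have h2z' : (1 - (t:ℂ) * 2) ≠ 0 := by rwa [mul_comm]
      field_simp [h1z', h2z', ht2z]
      linear_combination (-((1+(t:ℂ))*(1+3*(t:ℂ))*(t:ℂ)^2)) * Complex.I_sq
    rw [hG]
    exact ⟨mul_ne_zero (by exact_mod_cast hr.ne') hw0,
      by rw [Complex.arg_real_mul w hr, hargw]⟩
  · -- H
    have h3t : (0:ℝ) < (3 + t)⁻¹ := by positivity
    have hH : (Complex.I * (t:ℂ) - 1) / (3 + (t:ℂ)) = (((3 + t)⁻¹ : ℝ) : ℂ) * w := by
      rw [hwdef]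
      push_cast
      rw [div_eq_inv_mul]
    rw [hH]
    exact ⟨mul_ne_zero (by exact_mod_cast h3t.ne') hw0,
      by rw [Complex.arg_real_mul w h3t, hargw]⟩
end
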